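/- If t̄ ∉ C and λ > λ#, then the norm-penalized KLIEP loss ℓ_λ(Δ) = ℓ(Δ) + λ·N(Δ) attains a global minimum, i.e., there exists Δ₀ ∈ ℝ^k with ℓ_λ(Δ₀) ≤ ℓ_λ(Δ) for all Δ ∈ ℝ^k. (Theorem 2(iii)(a).) -/

import Mathlib

open scoped RealInnerProductSpace

/-- The empirical KLIEP loss
`ℓ(Δ) = -⟪Δ, t̄⟫ + log((1/n) ∑_j exp ⟪Δ, t_j⟫)`. -/
noncomputable def kliepLoss {k n : ℕ} (tbar : EuclideanSpace ℝ (Fin k))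
    (t : Fin n → EuclideanSpace ℝ (Fin k)) (Δ : EuclideanSpace ℝ (Fin k)) : ℝ :=
  -⟪Δ, tbar⟫ + Real.log ((1 / (n : ℝ)) * ∑ j, Real.exp ⟪Δ, t j⟫)

/-- The dual norm `N#(v) = sup { ⟪Δ, v⟫ : N(Δ) ≤ 1 }` of a norm `N` on `ℝ^k`. -/
noncomputable def dualNorm {k : ℕ} (N : EuclideanSpace ℝ (Fin k) → ℝ)
    (v : EuclideanSpace ℝ (Fin k)) : ℝ :=
  sSup ((fun Δ : EuclideanSpace ℝ (Fin k) => ⟪Δ, v⟫) '' {Δ | N Δ ≤ 1})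

theorem kliep_aux_bound {k : ℕ} (N : EuclideanSpace ℝ (Fin k) → ℝ)
    (hN_add : ∀ x y, N (x + y) ≤ N x + N y)
    (hN_smul : ∀ (c : ℝ) (x), N (c • x) = |c| * N x)
    (hN0 : N 0 = 0) :
    ∃ C : ℝ, 0 ≤ C ∧ ∀ x, N x ≤ C * ‖x‖ := by
  have hNneg : ∀ x, N (-x) = N x := fun x => by simpa using hN_smul (-1) x
  have hN_nonneg : ∀ x, 0 ≤ N x := fun x => by
    have h := hN_add x (-x)
    rw [add_neg_cancel, hN0, hNneg] at h; linarith
  set b := EuclideanSpace.basisFun (Fin k) ℝ with hb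
  refine ⟨∑ i, N (b i), Finset.sum_nonneg fun i _ => hN_nonneg _, fun x => ?_⟩
  have hx : ∑ i, b.repr x i • b i = x := b.sum_repr x
  calc N x = N (∑ i, b.repr x i • b i) := by rw [hx]
  _ ≤ ∑ i, N (b.repr x i • b i) :=
      Finset.le_sum_of_subadditive N hN0.le hN_add _ _
  _ = ∑ i, |b.repr x i| * N (b i) := by simp [hN_smul]
  _ ≤ ∑ i, ‖x‖ * N (b i) := by
      apply Finset.sum_le_sum
      intro i _
      refine mul_le_mul_of_nonneg_right ?_ (hN_nonneg _)
      rw [EuclideanSpace.basisFun_repr, EuclideanSpace.norm_eq, ← Real.sqrt_sq_eq_abs]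
      apply Real.sqrt_le_sqrt
      calc x i ^ 2 = ‖x i‖ ^ 2 := by rw [Real.norm_eq_abs, sq_abs]
      _ ≤ ∑ j, ‖x j‖ ^ 2 := Finset.single_le_sum (f := fun j => ‖x j‖ ^ 2) (fun j _ => sq_nonneg _) (Finset.mem_univ i)
  _ = (∑ i, N (b i)) * ‖x‖ := by rw [Finset.sum_mul]; simp [mul_comm]

theorem kliep_aux_lower {k : ℕ} (hk : 1 ≤ k) (N : EuclideanSpace ℝ (Fin k) → ℝ)
    (hN_add : ∀ x y, N (x + y) ≤ N x + N y)
    (hN_smul : ∀ (c : ℝ) (x), N (c • x) = |c| * N x)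
    (hN_zero : ∀ x, N x = 0 ↔ x = 0)
    (hN_cont : Continuous N) :
    ∃ m : ℝ, 0 < m ∧ ∀ x, m * ‖x‖ ≤ N x := by
  haveI : Nontrivial (EuclideanSpace ℝ (Fin k)) := by
    refine ⟨EuclideanSpace.single ⟨0, hk⟩ 1, 0, fun h => ?_⟩
    have := congrArg (fun f : EuclideanSpace ℝ (Fin k) => f ⟨0, hk⟩) h
    simpa using this
  have hsph : (Metric.sphere (0 : EuclideanSpace ℝ (Fin k)) 1).Nonempty :=
    NormedSpace.sphere_nonempty.mpr zero_le_one
  obtain ⟨z, hz, hzmin⟩ :=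
    (isCompact_sphere (0 : EuclideanSpace ℝ (Fin k)) 1).exists_isMinOn hsph hN_cont.continuousOn
  have hznorm : ‖z‖ = 1 := by simpa using hz
  have hzne : z ≠ 0 := by intro h; rw [h] at hznorm; simp at hznorm
  have hNnonneg : 0 ≤ N z := by
    have hNneg : ∀ x, N (-x) = N x := fun x => by simpa using hN_smul (-1) x
    have h := hN_add z (-z)
    rw [add_neg_cancel, (hN_zero 0).mpr rfl, hNneg] at h; linarith
  have hm : 0 < N z := by
    rcases lt_or_eq_of_le hNnonneg with h | h
    · exact h
    · exact absurd ((hN_zero z).mp h.symm) hzne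
  refine ⟨N z, hm, fun x => ?_⟩
  rcases eq_or_ne x 0 with rfl | hx
  · simp [(hN_zero 0).mpr rfl]
  · have hxn : (0 : ℝ) < ‖x‖ := norm_pos_iff.mpr hx
    have hu : ‖x‖⁻¹ • x ∈ Metric.sphere (0 : EuclideanSpace ℝ (Fin k)) 1 := by
      simp [norm_smul, abs_of_pos (inv_pos.mpr hxn), inv_mul_cancel₀ hxn.ne']
    have h2 : N z ≤ N (‖x‖⁻¹ • x) := hzmin hu
    have hNu : N (‖x‖⁻¹ • x) = ‖x‖⁻¹ * N x := by
      rw [hN_smul, abs_of_pos (inv_pos.mpr hxn)]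
    rw [hNu] at h2
    calc N z * ‖x‖ ≤ (‖x‖⁻¹ * N x) * ‖x‖ := by nlinarith [h2]
    _ = N x := by field_simp


/-- Theorem 2(iii)(a): if `t̄ ∉ C` and `λ > λ#` (the dual-norm distance from `t̄` to `C`),
then the norm-penalized KLIEP loss `ℓ(Δ) + λ·N(Δ)` attains a global minimum. -/
theorem penalized_kliep_attains_min_of_gt_dual_dist {k n : ℕ} (hk : 1 ≤ k) (hn : 1 ≤ n)
    (tbar : EuclideanSpace ℝ (Fin k)) (t : Fin n → EuclideanSpace ℝ (Fin k))
    (N : EuclideanSpace ℝ (Fin k) → ℝ)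
    (hN_add : ∀ x y, N (x + y) ≤ N x + N y)
    (hN_smul : ∀ (c : ℝ) (x), N (c • x) = |c| * N x)
    (hN_zero : ∀ x, N x = 0 ↔ x = 0)
    (hout : tbar ∉ convexHull ℝ (Set.range t))
    (lam : ℝ)
    (hlam : IsLeast ((fun s => dualNorm N (tbar - s)) '' convexHull ℝ (Set.range t)) lam) :
    ∀ lam' : ℝ, lam < lam' →
      ∃ Δ₀ : EuclideanSpace ℝ (Fin k), ∀ Δ : EuclideanSpace ℝ (Fin k),
        kliepLoss tbar t Δ₀ + lam' * N Δ₀ ≤ kliepLoss tbar t Δ + lam' * N Δ := by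
  intro lam' hlam'
  have hN0 : N 0 = 0 := (hN_zero 0).mpr rfl
  have hNneg : ∀ x, N (-x) = N x := fun x => by simpa using hN_smul (-1) x
  obtain ⟨C, hC0, hCb⟩ := kliep_aux_bound N hN_add hN_smul hN0
  have hN_cont : Continuous N := by
    have hlip : LipschitzWith C.toNNReal N := by
      apply LipschitzWith.of_dist_le_mul
      intro x y
      rw [Real.dist_eq, dist_eq_norm]
      have h1 : N x ≤ N y + N (x - y) := by
        have := hN_add y (x - y); rwa [add_sub_cancel] at this
      have h2 : N y ≤ N x + N (y - x) := by
        have := hN_add x (y - x); rwa [add_sub_cancel] at this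
      have h3 : N (y - x) = N (x - y) := by rw [← neg_sub x y, hNneg]
      have h4 : |N x - N y| ≤ N (x - y) := abs_sub_le_iff.mpr ⟨by linarith, by linarith⟩
      calc |N x - N y| ≤ N (x - y) := h4
      _ ≤ C * ‖x - y‖ := hCb _
      _ = (C.toNNReal : ℝ) * ‖x - y‖ := by rw [Real.coe_toNNReal C hC0]
    exact hlip.continuous
  obtain ⟨m, hm, hmlb⟩ := kliep_aux_lower hk N hN_add hN_smul hN_zero hN_cont
  -- dual norm facts
  have hbdd : ∀ v : EuclideanSpace ℝ (Fin k),
      BddAbove ((fun Δ : EuclideanSpace ℝ (Fin k) => ⟪Δ, v⟫) '' {Δ | N Δ ≤ 1}) := by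
    intro v
    refine ⟨‖v‖ / m, ?_⟩
    rintro y ⟨Δ, hΔ, rfl⟩
    have h1 : ‖Δ‖ ≤ 1 / m := by
      rw [le_div_iff₀ hm]
      have := hmlb Δ
      have hΔ' : N Δ ≤ 1 := hΔ
      nlinarith
    calc ⟪Δ, v⟫ ≤ ‖Δ‖ * ‖v‖ := real_inner_le_norm Δ v
    _ ≤ (1 / m) * ‖v‖ := mul_le_mul_of_nonneg_right h1 (norm_nonneg v)
    _ = ‖v‖ / m := by ring
  have hkey : ∀ (Δ v : EuclideanSpace ℝ (Fin k)), ⟪Δ, v⟫ ≤ N Δ * dualNorm N v := by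
    intro Δ v
    rcases eq_or_ne Δ 0 with rfl | hΔ
    · simp [hN0]
    · have hNΔ : 0 < N Δ := lt_of_lt_of_le (mul_pos hm (norm_pos_iff.mpr hΔ)) (hmlb Δ)
      have hu : N ((N Δ)⁻¹ • Δ) ≤ 1 := by
        rw [hN_smul, abs_of_pos (inv_pos.mpr hNΔ), inv_mul_cancel₀ hNΔ.ne']
      have hmem : ⟪(N Δ)⁻¹ • Δ, v⟫ ∈
          ((fun Δ : EuclideanSpace ℝ (Fin k) => ⟪Δ, v⟫) '' {Δ | N Δ ≤ 1}) :=
        ⟨(N Δ)⁻¹ • Δ, hu, rfl⟩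
      have hle := le_csSup (hbdd v) hmem
      rw [real_inner_smul_left] at hle
      calc ⟪Δ, v⟫ = N Δ * ((N Δ)⁻¹ * ⟪Δ, v⟫) := by field_simp
      _ ≤ N Δ * dualNorm N v := mul_le_mul_of_nonneg_left hle hNΔ.le
  obtain ⟨tstar, htstarC, htstar⟩ := hlam.1
  simp only at htstar
  haveI : Nonempty (Fin n) := ⟨⟨0, hn⟩⟩
  have hnpos : (0 : ℝ) < (n : ℝ) := by exact_mod_cast hn
  set c := (lam' - lam) * m with hc
  have hcpos : 0 < c := mul_pos (by linarith) hm
  -- coercive lower bound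
  have hlb : ∀ Δ : EuclideanSpace ℝ (Fin k),
      c * ‖Δ‖ - Real.log n ≤ kliepLoss tbar t Δ + lam' * N Δ := by
    intro Δ
    set M := Finset.univ.sup' Finset.univ_nonempty (fun j => ⟪Δ, t j⟫) with hM
    obtain ⟨j0, _, hj0⟩ := Finset.exists_mem_eq_sup' Finset.univ_nonempty (fun j => ⟪Δ, t j⟫)
    have hconv : convexHull ℝ (Set.range t) ⊆ {x : EuclideanSpace ℝ (Fin k) | ⟪Δ, x⟫ ≤ M} := by
      apply convexHull_min
      · rintro x ⟨j, rfl⟩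
        exact Finset.le_sup' (fun j => ⟪Δ, t j⟫) (Finset.mem_univ j)
      · exact convex_halfSpace_le
          ⟨fun x y => inner_add_right _ _ _, fun r x => real_inner_smul_right _ _ _⟩ M
    have hts : ⟪Δ, tstar⟫ ≤ M := hconv htstarC
    have hsum : Real.exp M ≤ ∑ j, Real.exp ⟪Δ, t j⟫ := by
      rw [hM, hj0]
      exact Finset.single_le_sum (f := fun j => Real.exp ⟪Δ, t j⟫)
        (fun j _ => (Real.exp_pos _).le) (Finset.mem_univ j0)
    have hlog : M - Real.log n ≤ Real.log ((1 / (n : ℝ)) * ∑ j, Real.exp ⟪Δ, t j⟫) := by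
      have h1 : (0 : ℝ) < (1 / (n : ℝ)) * Real.exp M := by positivity
      have h2 : (1 / (n : ℝ)) * Real.exp M ≤ (1 / (n : ℝ)) * ∑ j, Real.exp ⟪Δ, t j⟫ :=
        mul_le_mul_of_nonneg_left hsum (by positivity)
      calc M - Real.log n = Real.log ((1 / (n : ℝ)) * Real.exp M) := by
            rw [Real.log_mul (by positivity) (Real.exp_ne_zero _), Real.log_exp,
              one_div, Real.log_inv]; ring
      _ ≤ _ := Real.log_le_log h1 h2
    have hk2 : ⟪Δ, tbar - tstar⟫ ≤ N Δ * lam := by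
      have := hkey Δ (tbar - tstar); rwa [htstar] at this
    rw [inner_sub_right] at hk2
    have hNlb := hmlb Δ
    unfold kliepLoss
    nlinarith [hlog, hts, hk2, hmlb Δ, norm_nonneg Δ, hlam'.le]
  -- value at zero
  have hone : ((1 : ℝ) / n) * ∑ j : Fin n, Real.exp ⟪(0 : EuclideanSpace ℝ (Fin k)), t j⟫ = 1 := by
    simp only [inner_zero_left, Real.exp_zero, Finset.sum_const, Finset.card_univ,
      Fintype.card_fin, nsmul_eq_mul, mul_one]
    field_simp
  have hf0 : kliepLoss tbar t 0 + lam' * N 0 = 0 := by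
    rw [kliepLoss, hone, hN0]
    simp
  -- continuity of objective
  have hfc : Continuous fun Δ : EuclideanSpace ℝ (Fin k) => kliepLoss tbar t Δ + lam' * N Δ := by
    unfold kliepLoss
    refine Continuous.add (Continuous.add ?_ ?_) (continuous_const.mul hN_cont)
    · exact (continuous_id.inner continuous_const).neg
    · refine Continuous.log ?_ ?_
      · exact continuous_const.mul
          (continuous_finset_sum _ fun j _ => Real.continuous_exp.comp
            (continuous_id.inner continuous_const))
      · intro x
        have : (0 : ℝ) < (1 / (n : ℝ)) * ∑ j, Real.exp ⟪x, t j⟫ :=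
          mul_pos (by positivity)
            (Finset.sum_pos (fun j _ => Real.exp_pos _) Finset.univ_nonempty)
        exact this.ne'
  set R := max ((Real.log n + 1) / c) 0 with hR
  have hRnn : (0 : ℝ) ≤ R := le_max_right _ _
  obtain ⟨Δ₀, hΔ₀mem, hΔ₀min⟩ :=
    (isCompact_closedBall (0 : EuclideanSpace ℝ (Fin k)) R).exists_isMinOn
      ⟨0, Metric.mem_closedBall_self hRnn⟩ hfc.continuousOn
  refine ⟨Δ₀, fun Δ => ?_⟩
  by_cases hΔ : Δ ∈ Metric.closedBall (0 : EuclideanSpace ℝ (Fin k)) R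
  · exact hΔ₀min hΔ
  · have h1 : R < ‖Δ‖ := by
      rw [Metric.mem_closedBall, dist_zero_right, not_le] at hΔ
      exact hΔ
    have h2 : Real.log n + 1 ≤ c * ‖Δ‖ := by
      have hle : (Real.log n + 1) / c ≤ ‖Δ‖ := (le_max_left _ _).trans h1.le
      rw [div_le_iff₀ hcpos] at hle
      linarith
    have h3 := hlb Δ
    have h4 : kliepLoss tbar t Δ₀ + lam' * N Δ₀ ≤ 0 := by
      have h5 : kliepLoss tbar t Δ₀ + lam' * N Δ₀ ≤ kliepLoss tbar t 0 + lam' * N 0 :=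
        hΔ₀min (Metric.mem_closedBall_self hRnn)
      rwa [hf0] at h5
    linarith
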